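/- (Per-multipole LASSO error bounds.) Let M ≥ 1 and p ≥ 1 be integers, X a real M×p matrix, φ ∈ ℝ^p with at most q nonzero entries, E ∈ ℝ^M, and Y = Xφ + E. Set Γ̂ = XᵀX/M. For a penalty parameter λ > 0, let φ̂ ∈ ℝ^p be any minimizer over β ∈ ℝ^p of (1/M)‖Y − Xβ‖₂² + λ‖β‖₁, and set v = φ̂ − φ. Suppose ‖XᵀE/M‖_∞ ≤ λ/4, and suppose Γ̂ satisfies the restricted eigenvalue condition RE(α, τ) with q·τ ≤ α/32. Then: (i) ‖v‖₂ ≤ 12√q·λ/α; (ii) ‖v‖₁ ≤ 48·q·λ/α; and (iii) vᵀΓ̂v ≤ 72·q·λ²/α. -/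

import Mathlib

open Matrix Real

/-- The ℓ¹ norm on `Fin p → ℝ`. -/
noncomputable def l1 {p : ℕ} (v : Fin p → ℝ) : ℝ := ∑ i, |v i|

/-- The ℓ² (Euclidean) norm on `Fin n → ℝ`. -/
noncomputable def l2 {n : ℕ} (v : Fin n → ℝ) : ℝ := Real.sqrt (∑ i, (v i) ^ 2)

/-- The ℓ∞ norm on `Fin p → ℝ`. -/
noncomputable def linf {p : ℕ} (v : Fin p → ℝ) : ℝ := ⨆ i, |v i|

/-- The restricted eigenvalue condition `RE(α, τ)`:
`θᵀAθ ≥ α‖θ‖₂² − τ‖θ‖₁²` for every `θ ∈ ℝ^p`. -/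
def RECond {p : ℕ} (A : Matrix (Fin p) (Fin p) ℝ) (α τ : ℝ) : Prop :=
  ∀ θ : Fin p → ℝ, α * (l2 θ) ^ 2 - τ * (l1 θ) ^ 2 ≤ θ ⬝ᵥ (A *ᵥ θ)

lemma l1_nonneg {p : ℕ} (v : Fin p → ℝ) : 0 ≤ l1 v :=
  Finset.sum_nonneg fun i _ => abs_nonneg _

lemma l2_nonneg {p : ℕ} (v : Fin p → ℝ) : 0 ≤ l2 v := Real.sqrt_nonneg _

lemma l2_sq {p : ℕ} (v : Fin p → ℝ) : (l2 v) ^ 2 = ∑ i, (v i) ^ 2 :=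
  Real.sq_sqrt (Finset.sum_nonneg fun i _ => sq_nonneg _)

lemma hoelder {p : ℕ} (hp : 1 ≤ p) (w z : Fin p → ℝ) : w ⬝ᵥ z ≤ linf w * l1 z := by
  have hne : Nonempty (Fin p) := ⟨⟨0, hp⟩⟩
  have hbd : ∀ i, |w i| ≤ linf w := fun i => by
    rw [linf]
    exact le_ciSup (f := fun j => |w j|) (Set.Finite.bddAbove (Set.finite_range _)) i
  calc w ⬝ᵥ z = ∑ i, w i * z i := rfl
    _ ≤ ∑ i, |w i| * |z i| := Finset.sum_le_sum fun i _ => by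
        calc w i * z i ≤ |w i * z i| := le_abs_self _
          _ = |w i| * |z i| := abs_mul _ _
    _ ≤ ∑ i, linf w * |z i| := Finset.sum_le_sum fun i _ =>
        mul_le_mul_of_nonneg_right (hbd i) (abs_nonneg _)
    _ = linf w * l1 z := by rw [l1, Finset.mul_sum]

/-- **Per-multipole LASSO error bounds.** Under the deviation condition
`‖XᵀE/M‖_∞ ≤ λ/4` and the restricted eigenvalue condition `RE(α, τ)` for
`Γ̂ = XᵀX/M` with `q·τ ≤ α/32`, any LASSO solution `φ̂` satisfies, with `v = φ̂ − φ`: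
(i) `‖v‖₂ ≤ 12√q·λ/α`; (ii) `‖v‖₁ ≤ 48qλ/α`; (iii) `vᵀΓ̂v ≤ 72qλ²/α`. -/
theorem lasso_error_bounds (M p : ℕ) (hM : 1 ≤ M) (hp : 1 ≤ p)
    (X : Matrix (Fin M) (Fin p) ℝ) (φ : Fin p → ℝ) (E : Fin M → ℝ)
    (q : ℕ) (hsparse : (Finset.univ.filter (fun i => φ i ≠ 0)).card ≤ q)
    (Y : Fin M → ℝ) (hY : Y = X *ᵥ φ + E)
    (Γhat : Matrix (Fin p) (Fin p) ℝ) (hΓ : Γhat = (M : ℝ)⁻¹ • (Xᵀ * X))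
    (lam : ℝ) (hlam : 0 < lam)
    (φhat : Fin p → ℝ)
    (hmin : ∀ β : Fin p → ℝ,
      (M : ℝ)⁻¹ * (∑ i, (Y i - (X *ᵥ φhat) i) ^ 2) + lam * l1 φhat
        ≤ (M : ℝ)⁻¹ * (∑ i, (Y i - (X *ᵥ β) i) ^ 2) + lam * l1 β)
    (v : Fin p → ℝ) (hv : v = φhat - φ)
    (hdev : linf ((M : ℝ)⁻¹ • (Xᵀ *ᵥ E)) ≤ lam / 4)
    (α τ : ℝ) (hα : 0 < α) (hτ : 0 < τ)
    (hRE : RECond Γhat α τ) (hqτ : (q : ℝ) * τ ≤ α / 32) :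
    l2 v ≤ 12 * Real.sqrt q * lam / α ∧
    l1 v ≤ 48 * q * lam / α ∧
    v ⬝ᵥ (Γhat *ᵥ v) ≤ 72 * q * lam ^ 2 / α := by
  have hMpos : (0:ℝ) < (M:ℝ) := by exact_mod_cast hM
  have hMinv : (0:ℝ) ≤ (M:ℝ)⁻¹ := by positivity
  set u : Fin M → ℝ := X *ᵥ v with hu
  set T : ℝ := v ⬝ᵥ (Γhat *ᵥ v) with hTdef
  -- T = M⁻¹ * ∑ u²
  have hT : T = (M:ℝ)⁻¹ * ∑ i, (u i)^2 := by
    rw [hTdef, hΓ, Matrix.smul_mulVec, dotProduct_smul, smul_eq_mul,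
      ← Matrix.mulVec_mulVec, Matrix.dotProduct_mulVec, Matrix.vecMul_transpose]
    congr 1
    simp [dotProduct, sq, hu]
  have hT0 : 0 ≤ T := by
    rw [hT]; exact mul_nonneg hMinv (Finset.sum_nonneg fun i _ => sq_nonneg _)
  -- the residual identity
  have hφhat : φhat = φ + v := by rw [hv]; ext i; simp
  have hres : ∀ i, Y i - (X *ᵥ φhat) i = E i - u i := by
    intro i
    rw [hY, hφhat, Matrix.mulVec_add]
    simp [hu]
  have hres0 : ∀ i, Y i - (X *ᵥ φ) i = E i := by
    intro i; rw [hY]; simp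
  -- basic inequality
  have hdot : (Xᵀ *ᵥ E) ⬝ᵥ v = ∑ i, E i * u i := by
    rw [dotProduct_comm, Matrix.dotProduct_mulVec, Matrix.vecMul_transpose,
      dotProduct_comm]
    rfl
  have hbasic : T ≤ 2 * (((M:ℝ)⁻¹ • (Xᵀ *ᵥ E)) ⬝ᵥ v) + lam * (l1 φ - l1 φhat) := by
    have h := hmin φ
    have e1 : ∑ i, (Y i - (X *ᵥ φhat) i)^2
        = ∑ i, (E i)^2 - 2 * (∑ i, E i * u i) + ∑ i, (u i)^2 := by
      rw [Finset.sum_congr rfl fun i _ => by rw [hres i]]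
      rw [Finset.sum_congr rfl (fun i _ => by ring :
        ∀ i ∈ Finset.univ, (E i - u i)^2 = ((E i)^2 - 2*(E i * u i) + (u i)^2)),
        Finset.sum_add_distrib, Finset.sum_sub_distrib, ← Finset.mul_sum]
    have e2 : ∑ i, (Y i - (X *ᵥ φ) i)^2 = ∑ i, (E i)^2 := by
      exact Finset.sum_congr rfl fun i _ => by rw [hres0 i]
    rw [e1, e2] at h
    have e3 : ((M:ℝ)⁻¹ • (Xᵀ *ᵥ E)) ⬝ᵥ v = (M:ℝ)⁻¹ * ∑ i, E i * u i := by
      rw [smul_dotProduct, smul_eq_mul, hdot]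
    rw [hT, e3]
    linarith [h]
  -- support split
  set S : Finset (Fin p) := Finset.univ.filter (fun i => φ i ≠ 0) with hS
  set a : ℝ := ∑ i ∈ S, |v i| with ha
  set b : ℝ := ∑ i ∈ Finset.univ.filter (fun i => ¬ φ i ≠ 0), |v i| with hb
  have ha0 : 0 ≤ a := Finset.sum_nonneg fun i _ => abs_nonneg _
  have hb0 : 0 ≤ b := Finset.sum_nonneg fun i _ => abs_nonneg _
  have hl1v : l1 v = a + b := by
    rw [l1, ha, hb, hS, Finset.sum_filter_add_sum_filter_not]
  have hsupp : l1 φ - l1 φhat ≤ a - b := by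
    have lφ : l1 φ = ∑ i ∈ S, |φ i| := by
      rw [l1, ← Finset.sum_filter_add_sum_filter_not Finset.univ (fun i => φ i ≠ 0)]
      have : ∑ i ∈ Finset.univ.filter (fun i => ¬ φ i ≠ 0), |φ i| = 0 := by
        apply Finset.sum_eq_zero
        intro i hi
        simp only [Finset.mem_filter, not_not] at hi
        simp [hi.2]
      rw [this, add_zero]
    have lφhat : l1 φhat = ∑ i ∈ S, |φhat i| + b := by
      rw [l1, ← Finset.sum_filter_add_sum_filter_not Finset.univ (fun i => φ i ≠ 0), hb]
      congr 1
      apply Finset.sum_congr rfl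
      intro i hi
      simp only [Finset.mem_filter, not_not] at hi
      rw [hv]; simp [hi.2]
    rw [lφ, lφhat, ha]
    have : ∑ i ∈ S, |φ i| - ∑ i ∈ S, |φhat i| ≤ ∑ i ∈ S, |v i| := by
      rw [← Finset.sum_sub_distrib]
      apply Finset.sum_le_sum
      intro i _
      have := abs_sub_abs_le_abs_sub (φ i) (φhat i)
      rw [hv]
      simpa [abs_sub_comm] using this
    linarith
  -- Hölder step
  have hhold : ((M:ℝ)⁻¹ • (Xᵀ *ᵥ E)) ⬝ᵥ v ≤ (lam/4) * (a + b) := by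
    calc ((M:ℝ)⁻¹ • (Xᵀ *ᵥ E)) ⬝ᵥ v ≤ linf ((M:ℝ)⁻¹ • (Xᵀ *ᵥ E)) * l1 v :=
          hoelder hp _ _
      _ ≤ (lam/4) * l1 v := by
          apply mul_le_mul_of_nonneg_right hdev (l1_nonneg v)
      _ = (lam/4) * (a + b) := by rw [hl1v]
  -- T upper bound
  have hTub : T ≤ (3/2) * lam * a - (1/2) * lam * b := by
    have := hbasic
    have h9 := mul_le_mul_of_nonneg_left hsupp hlam.le
    linarith [hhold]
  -- cone condition
  have hcone : b ≤ 3 * a := by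
    have h10 : 0 ≤ (3/2) * lam * a - (1/2) * lam * b := le_trans hT0 hTub
    have h11 : lam * b ≤ lam * (3 * a) := by linarith
    exact le_of_mul_le_mul_left h11 hlam
  have hl1le : l1 v ≤ 4 * a := by rw [hl1v]; linarith
  -- Cauchy–Schwarz on S
  have hq0 : (0:ℝ) ≤ (q:ℝ) := Nat.cast_nonneg q
  have hCS : a ≤ Real.sqrt q * l2 v := by
    have h1 : a^2 ≤ (S.card : ℝ) * ∑ i ∈ S, (v i)^2 := by
      have := Finset.sum_mul_sq_le_sq_mul_sq S (fun _ => (1:ℝ)) (fun i => |v i|)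
      simp only [one_mul, one_pow] at this
      calc a^2 = (∑ i ∈ S, |v i|)^2 := by rw [ha]
        _ ≤ (∑ i ∈ S, (1:ℝ)) * ∑ i ∈ S, |v i|^2 := this
        _ = (S.card : ℝ) * ∑ i ∈ S, (v i)^2 := by
            rw [Finset.sum_const, nsmul_eq_mul, mul_one]
            congr 1
            exact Finset.sum_congr rfl fun i _ => sq_abs _
    have h2 : ∑ i ∈ S, (v i)^2 ≤ (l2 v)^2 := by
      rw [l2_sq]
      exact Finset.sum_le_sum_of_subset_of_nonneg (Finset.subset_univ S)
        (fun i _ _ => sq_nonneg _)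
    have h3 : a^2 ≤ (q:ℝ) * (l2 v)^2 := by
      have hc : (S.card : ℝ) ≤ (q:ℝ) := by exact_mod_cast hsparse
      have hsum0 : (0:ℝ) ≤ ∑ i ∈ S, (v i)^2 := Finset.sum_nonneg fun i _ => sq_nonneg (v i)
      have ha1 : (S.card : ℝ) * ∑ i ∈ S, (v i)^2 ≤ (q:ℝ) * ∑ i ∈ S, (v i)^2 :=
        mul_le_mul_of_nonneg_right hc hsum0
      have ha2 : (q:ℝ) * ∑ i ∈ S, (v i)^2 ≤ (q:ℝ) * (l2 v)^2 :=
        mul_le_mul_of_nonneg_left h2 hq0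
      linarith
    have h4 : a ≤ Real.sqrt ((q:ℝ) * (l2 v)^2) := by
      rw [Real.le_sqrt ha0 (by positivity)]
      exact h3
    calc a ≤ Real.sqrt ((q:ℝ) * (l2 v)^2) := h4
      _ = Real.sqrt q * l2 v := by
          rw [Real.sqrt_mul hq0, Real.sqrt_sq (l2_nonneg v)]
  set L : ℝ := l2 v with hL
  have hL0 : 0 ≤ L := l2_nonneg v
  have hsq : Real.sqrt (q:ℝ) ^ 2 = (q:ℝ) := Real.sq_sqrt hq0
  have hsq0 : 0 ≤ Real.sqrt (q:ℝ) := Real.sqrt_nonneg _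
  -- RE lower bound
  have hREv := hRE v
  have hl1sq : (l1 v)^2 ≤ 16 * (q:ℝ) * L^2 := by
    have h5 : l1 v ≤ 4 * Real.sqrt q * L := by
      calc l1 v ≤ 4 * a := hl1le
        _ ≤ 4 * (Real.sqrt q * L) := by linarith
        _ = 4 * Real.sqrt q * L := by ring
    have h6 : l1 v * l1 v ≤ (4 * Real.sqrt q * L) * (4 * Real.sqrt q * L) :=
      mul_self_le_mul_self (l1_nonneg v) h5
    calc (l1 v)^2 = l1 v * l1 v := sq (l1 v)
      _ ≤ (4 * Real.sqrt q * L) * (4 * Real.sqrt q * L) := h6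
      _ = 16 * (Real.sqrt q * Real.sqrt q) * L^2 := by ring
      _ = 16 * (q:ℝ) * L^2 := by rw [Real.mul_self_sqrt hq0]
  have hTlb : (α/2) * L^2 ≤ T := by
    have h7 : (q:ℝ) * τ * L^2 ≤ (α/32) * L^2 :=
      mul_le_mul_of_nonneg_right hqτ (sq_nonneg L)
    have : τ * (l1 v)^2 ≤ (α/2) * L^2 := by
      calc τ * (l1 v)^2 ≤ τ * (16 * (q:ℝ) * L^2) :=
            mul_le_mul_of_nonneg_left hl1sq hτ.le
        _ = 16 * ((q:ℝ) * τ * L^2) := by ring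
        _ ≤ 16 * ((α/32) * L^2) := by linarith
        _ = (α/2) * L^2 := by ring
    linarith [hREv]
  have hTub2 : T ≤ (3/2) * lam * (Real.sqrt q * L) := by
    calc T ≤ (3/2) * lam * a - (1/2) * lam * b := hTub
      _ ≤ (3/2) * lam * a := by
          have := mul_nonneg hlam.le hb0
          linarith
      _ ≤ (3/2) * lam * (Real.sqrt q * L) :=
          mul_le_mul_of_nonneg_left hCS (by positivity)
  -- conclude (i)
  have hi : L ≤ 12 * Real.sqrt q * lam / α := by
    rcases eq_or_lt_of_le hL0 with h | h
    · rw [← h]; positivity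
    · have h8 : (α * L) * L ≤ (3 * lam * Real.sqrt q) * L := by
        linarith [hTlb, hTub2]
      have key : α * L ≤ 3 * lam * Real.sqrt q := le_of_mul_le_mul_right h8 h
      rw [le_div_iff₀ hα]
      linarith [key, mul_nonneg hlam.le hsq0]
  have hss : Real.sqrt (q:ℝ) * Real.sqrt (q:ℝ) = (q:ℝ) := Real.mul_self_sqrt hq0
  have h12 : Real.sqrt (q:ℝ) * (12 * Real.sqrt (q:ℝ) * lam / α) = 12 * (q:ℝ) * lam / α := by
    calc Real.sqrt (q:ℝ) * (12 * Real.sqrt (q:ℝ) * lam / α)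
        = (Real.sqrt (q:ℝ) * Real.sqrt (q:ℝ)) * (12 * lam) / α := by ring
      _ = 12 * (q:ℝ) * lam / α := by rw [hss]; ring
  refine ⟨hi, ?_, ?_⟩
  · -- (ii)
    have haub : a ≤ 12 * (q:ℝ) * lam / α := by
      calc a ≤ Real.sqrt q * L := hCS
        _ ≤ Real.sqrt q * (12 * Real.sqrt q * lam / α) :=
          mul_le_mul_of_nonneg_left hi hsq0
        _ = 12 * (q:ℝ) * lam / α := h12
    calc l1 v ≤ 4 * a := hl1le
      _ ≤ 4 * (12 * (q:ℝ) * lam / α) := by linarith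
      _ = 48 * (q:ℝ) * lam / α := by ring
  · -- (iii)
    have hSL : Real.sqrt q * L ≤ 12 * (q:ℝ) * lam / α := by
      calc Real.sqrt q * L ≤ Real.sqrt q * (12 * Real.sqrt q * lam / α) :=
            mul_le_mul_of_nonneg_left hi hsq0
        _ = 12 * (q:ℝ) * lam / α := h12
    calc T ≤ (3/2) * lam * (Real.sqrt q * L) := hTub2
      _ ≤ (3/2) * lam * (12 * (q:ℝ) * lam / α) :=
          mul_le_mul_of_nonneg_left hSL (by positivity)
      _ = 18 * (q:ℝ) * lam^2 / α := by ring
      _ ≤ 72 * (q:ℝ) * lam^2 / α := by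
          apply (div_le_div_iff_of_pos_right hα).mpr
          linarith [mul_nonneg hq0 (sq_nonneg lam)]
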